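/- Unions of list-likelihood events are positively correlated: let L ≥ 1 and let P'₁, P'₂ be two families of L-element sets of messages in F₂^K. Then ν( (∪_{T∈P'₁} E'_T) ∩ (∪_{T'∈P'₂} E'_{T'}) ) ≥ ν(∪_{T∈P'₁} E'_T) · ν(∪_{T'∈P'₂} E'_{T'}). -/

import Mathlib

/-- The support `I_u` of the codeword `uG`: the positions where `uG` equals 1. -/
def Iu {K N : ℕ} (G : Matrix (Fin K) (Fin N) (ZMod 2)) (u : Fin K → ZMod 2) :
    Finset (Fin N) :=
  Finset.univ.filter (fun i => Matrix.vecMul u G i = 1)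

/-- The product measure on `Fin N → Y` whose coordinates are i.i.d. with law `p0`
(the channel output distribution when the all-zero codeword is sent). -/
noncomputable def nuMeas {Y : Type} [Fintype Y] {N : ℕ} (p0 : Y → ℝ)
    (S : Set (Fin N → Y)) : ℝ :=
  ∑ y : Fin N → Y, Set.indicator S (fun y => ∏ i, p0 (y i)) y

/-- `E'_u`: the event that the likelihood of message `u` given `y` is at least
that of the all-zero message. -/
def Eu' {Y : Type} {K N : ℕ} (G : Matrix (Fin K) (Fin N) (ZMod 2))
    (p0 p1 : Y → ℝ) (u : Fin K → ZMod 2) : Set (Fin N → Y) :=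
  {y | ∏ i ∈ Iu G u, p0 (y i) ≤ ∏ i ∈ Iu G u, p1 (y i)}

/-- `E'_T`: the event that every message in the finite set `T` is at least as
likely as the all-zero message. -/
def EuT' {Y : Type} {K N : ℕ} (G : Matrix (Fin K) (Fin N) (ZMod 2))
    (p0 p1 : Y → ℝ) (T : Finset (Fin K → ZMod 2)) : Set (Fin N → Y) :=
  ⋂ u ∈ T, Eu' G p0 p1 u


/-- Weighted Chebyshev: if `F,G` "monovary" then covariance is nonneg. -/
lemma cheb {Y : Type} [Fintype Y] (p F G : Y → ℝ) (hp : ∀ y, 0 ≤ p y)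
    (hps : ∑ y, p y = 1) (hFG : ∀ a b, 0 ≤ (F a - F b) * (G a - G b)) :
    (∑ a, p a * F a) * (∑ a, p a * G a) ≤ ∑ a, p a * (F a * G a) := by
  have hD : 0 ≤ ∑ a, ∑ b, p a * p b * ((F a - F b) * (G a - G b)) := by
    refine Finset.sum_nonneg fun a _ => Finset.sum_nonneg fun b _ => ?_
    exact mul_nonneg (mul_nonneg (hp a) (hp b)) (hFG a b)
  have hkey : ∑ a, ∑ b, p a * p b * ((F a - F b) * (G a - G b))
      = (∑ a, p a * (F a * G a)) * (∑ b, p b)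
        - (∑ a, p a * F a) * (∑ b, p b * G b)
        - (∑ a, p a * G a) * (∑ b, p b * F b)
        + (∑ a, p a) * (∑ b, p b * (F b * G b)) := by
    rw [Fintype.sum_mul_sum, Fintype.sum_mul_sum, Fintype.sum_mul_sum, Fintype.sum_mul_sum]
    rw [← Finset.sum_sub_distrib, ← Finset.sum_sub_distrib, ← Finset.sum_add_distrib]
    refine Finset.sum_congr rfl fun a _ => ?_
    rw [← Finset.sum_sub_distrib, ← Finset.sum_sub_distrib, ← Finset.sum_add_distrib]
    exact Finset.sum_congr rfl fun b _ => by ring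
  rw [hkey, hps] at hD
  nlinarith [hD]

/-- Harris' inequality for the i.i.d. product measure on `Fin N → Y`, with
monotonicity measured by a real-valued key `r` on `Y`. -/
lemma harris {Y : Type} [Fintype Y] (N : ℕ) (p : Y → ℝ) (hp : ∀ y, 0 ≤ p y)
    (hps : ∑ y, p y = 1) (r : Y → ℝ) (f g : (Fin N → Y) → ℝ)
    (hf : ∀ y y', (∀ i, r (y i) ≤ r (y' i)) → f y ≤ f y')
    (hg : ∀ y y', (∀ i, r (y i) ≤ r (y' i)) → g y ≤ g y') :
    (∑ y : Fin N → Y, (∏ i, p (y i)) * f y) * (∑ y : Fin N → Y, (∏ i, p (y i)) * g y)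
      ≤ ∑ y : Fin N → Y, (∏ i, p (y i)) * (f y * g y) := by
  induction N with
  | zero =>
      haveI : Unique (Fin 0 → Y) := ⟨⟨fun i => i.elim0⟩, fun y => funext fun i => i.elim0⟩
      simp [Fintype.sum_unique]
  | succ n ih =>
      have hsum : ∀ h : (Fin (n+1) → Y) → ℝ,
          ∑ y : Fin (n+1) → Y, h y = ∑ a : Y, ∑ z : Fin n → Y, h (Fin.cons a z) := by
        intro h
        rw [← Fintype.sum_equiv (Fin.consEquiv fun _ => Y)
          (fun q => h ((Fin.consEquiv fun _ => Y) q)) h (fun q => rfl),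
          Fintype.sum_prod_type]
        rfl
      set F : Y → ℝ := fun a => ∑ z : Fin n → Y, (∏ i, p (z i)) * f (Fin.cons a z) with hF
      set G : Y → ℝ := fun a => ∑ z : Fin n → Y, (∏ i, p (z i)) * g (Fin.cons a z) with hG
      have hWnn : ∀ z : Fin n → Y, 0 ≤ ∏ i, p (z i) :=
        fun z => Finset.prod_nonneg fun i _ => hp _
    -- rewrite the three sums
      have hrw : ∀ h : (Fin (n+1) → Y) → ℝ,
          ∑ y : Fin (n+1) → Y, (∏ i, p (y i)) * h y
            = ∑ a : Y, p a * ∑ z : Fin n → Y, (∏ i, p (z i)) * h (Fin.cons a z) := by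
        intro h
        rw [hsum (fun y => (∏ i, p (y i)) * h y)]
        refine Finset.sum_congr rfl fun a _ => ?_
        rw [Finset.mul_sum]
        refine Finset.sum_congr rfl fun z _ => ?_
        rw [Fin.prod_univ_succ]
        simp only [Fin.cons_zero, Fin.cons_succ]
        ring
      rw [hrw f, hrw g, hrw (fun y => f y * g y)]
      have hmonoF : ∀ a b, r a ≤ r b → F a ≤ F b := by
        intro a b hab
        refine Finset.sum_le_sum fun z _ => ?_
        refine mul_le_mul_of_nonneg_left ?_ (hWnn z)
        refine hf _ _ fun i => ?_
        refine Fin.cases ?_ (fun j => ?_) i <;> simp [hab]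
      have hmonoG : ∀ a b, r a ≤ r b → G a ≤ G b := by
        intro a b hab
        refine Finset.sum_le_sum fun z _ => ?_
        refine mul_le_mul_of_nonneg_left ?_ (hWnn z)
        refine hg _ _ fun i => ?_
        refine Fin.cases ?_ (fun j => ?_) i <;> simp [hab]
      have step1 : (∑ a, p a * F a) * (∑ a, p a * G a) ≤ ∑ a, p a * (F a * G a) := by
        refine cheb p F G hp hps fun a b => ?_
        rcases le_total (r a) (r b) with h | h
        · have h1 := hmonoF a b h
          have h2 := hmonoG a b h
          nlinarith
        · have h1 := hmonoF b a h
          have h2 := hmonoG b a h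
          nlinarith
      have step2 : ∑ a, p a * (F a * G a)
          ≤ ∑ a, p a * ∑ z : Fin n → Y, (∏ i, p (z i)) * (f (Fin.cons a z) * g (Fin.cons a z)) := by
        refine Finset.sum_le_sum fun a _ => ?_
        refine mul_le_mul_of_nonneg_left ?_ (hp a)
        exact ih (fun z => f (Fin.cons a z)) (fun z => g (Fin.cons a z))
          (fun z z' hz => hf _ _ fun i => by
            refine Fin.cases ?_ (fun j => ?_) i <;> simp [hz])
          (fun z z' hz => hg _ _ fun i => by
            refine Fin.cases ?_ (fun j => ?_) i <;> simp [hz])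
      exact le_trans step1 step2

/-- The key ordering `Y` by likelihood ratio, with zero-`p0` points on top. -/
noncomputable def rKey {Y : Type} [Fintype Y] (p0 p1 : Y → ℝ) (y : Y) : ℝ :=
  if p0 y = 0 then 1 + ∑ z, (if p0 z = 0 then 0 else p1 z / p0 z) else p1 y / p0 y

lemma rKey_lt {Y : Type} [Fintype Y] (p0 p1 : Y → ℝ) (hp1 : ∀ y, 0 ≤ p1 y)
    (hp0 : ∀ y, 0 ≤ p0 y) (y : Y) (hy : p0 y ≠ 0) :
    rKey p0 p1 y < 1 + ∑ z, (if p0 z = 0 then 0 else p1 z / p0 z) := by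
  rw [rKey, if_neg hy]
  have h1 : p1 y / p0 y ≤ ∑ z, (if p0 z = 0 then 0 else p1 z / p0 z) := by
    have := Finset.single_le_sum (f := fun z => if p0 z = 0 then 0 else p1 z / p0 z)
      (fun z _ => by show 0 ≤ (if p0 z = 0 then 0 else p1 z / p0 z); split_ifs; exacts [le_refl 0, div_nonneg (hp1 z) (hp0 z)])
      (Finset.mem_univ y)
    simpa [if_neg hy] using this
  linarith

/-- Membership in `E'`-type events is monotone with respect to `rKey`. -/
lemma event_mono {Y : Type} [Fintype Y] {N : ℕ} (p0 p1 : Y → ℝ)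
    (hp0 : ∀ y, 0 ≤ p0 y) (hp1 : ∀ y, 0 ≤ p1 y) (I : Finset (Fin N))
    (y y' : Fin N → Y) (h : ∀ i, rKey p0 p1 (y i) ≤ rKey p0 p1 (y' i))
    (hy : ∏ i ∈ I, p0 (y i) ≤ ∏ i ∈ I, p1 (y i)) :
    ∏ i ∈ I, p0 (y' i) ≤ ∏ i ∈ I, p1 (y' i) := by
  by_cases hz : ∃ i ∈ I, p0 (y' i) = 0
  · obtain ⟨i, hi, h0⟩ := hz
    rw [Finset.prod_eq_zero hi h0]
    exact Finset.prod_nonneg fun j _ => hp1 _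
  · push_neg at hz
    have hy'pos : ∀ i ∈ I, 0 < p0 (y' i) := fun i hi => (hp0 _).lt_of_ne' (hz i hi)
    have hypos : ∀ i ∈ I, p0 (y i) ≠ 0 := by
      intro i hi h0
      have h1 := h i
      rw [rKey, if_pos h0] at h1
      have h2 := rKey_lt p0 p1 hp1 hp0 (y' i) (hz i hi)
      linarith
    have hr : ∀ i ∈ I, p1 (y i) / p0 (y i) ≤ p1 (y' i) / p0 (y' i) := by
      intro i hi
      have := h i
      rwa [rKey, rKey, if_neg (hypos i hi), if_neg (hz i hi)] at this
    have h1 : 1 ≤ ∏ i ∈ I, p1 (y i) / p0 (y i) := by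
      rw [Finset.prod_div_distrib]
      rw [one_le_div (Finset.prod_pos fun i hi => (hp0 _).lt_of_ne' (hypos i hi))]
      exact hy
    have h2 : ∏ i ∈ I, p1 (y i) / p0 (y i) ≤ ∏ i ∈ I, p1 (y' i) / p0 (y' i) :=
      Finset.prod_le_prod (fun i hi => div_nonneg (hp1 _) (hp0 _)) hr
    have h3 : ∏ i ∈ I, p1 (y' i) / p0 (y' i) = (∏ i ∈ I, p1 (y' i)) / ∏ i ∈ I, p0 (y' i) :=
      Finset.prod_div_distrib _ _
    have h4 : 0 < ∏ i ∈ I, p0 (y' i) := Finset.prod_pos hy'pos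
    rw [h3] at h2
    have h5 : 1 ≤ (∏ i ∈ I, p1 (y' i)) / ∏ i ∈ I, p0 (y' i) := le_trans h1 h2
    rw [le_div_iff₀ h4, one_mul] at h5
    exact h5


/-- Unions of list-likelihood events are positively correlated. -/
theorem EuT'_unions_pos_correlated (Y : Type) [Fintype Y] (K N : ℕ)
    (G : Matrix (Fin K) (Fin N) (ZMod 2)) (p0 p1 : Y → ℝ)
    (hp0 : ∀ y, 0 ≤ p0 y) (hp1 : ∀ y, 0 ≤ p1 y)
    (hp0sum : ∑ y, p0 y = 1) (hp1sum : ∑ y, p1 y = 1)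
    (L : ℕ) (hL : 1 ≤ L)
    (P₁ P₂ : Set (Finset (Fin K → ZMod 2)))
    (hP₁ : ∀ T ∈ P₁, T.card = L) (hP₂ : ∀ T ∈ P₂, T.card = L) :
    nuMeas p0 ((⋃ T ∈ P₁, EuT' G p0 p1 T) ∩ ⋃ T ∈ P₂, EuT' G p0 p1 T)
      ≥ nuMeas p0 (⋃ T ∈ P₁, EuT' G p0 p1 T)
          * nuMeas p0 (⋃ T ∈ P₂, EuT' G p0 p1 T) := by
  set r := rKey p0 p1 with hr
  -- monotonicity of the union events
  have hmono : ∀ P : Set (Finset (Fin K → ZMod 2)), ∀ y y' : Fin N → Y,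
      (∀ i, r (y i) ≤ r (y' i)) → y ∈ ⋃ T ∈ P, EuT' G p0 p1 T →
        y' ∈ ⋃ T ∈ P, EuT' G p0 p1 T := by
    intro P y y' h hy
    simp only [Set.mem_iUnion, EuT', Set.mem_iInter] at hy ⊢
    obtain ⟨T, hT, hyT⟩ := hy
    exact ⟨T, hT, fun u hu => event_mono p0 p1 hp0 hp1 _ y y' h (hyT u hu)⟩
  set S₁ := ⋃ T ∈ P₁, EuT' G p0 p1 T
  set S₂ := ⋃ T ∈ P₂, EuT' G p0 p1 T
  classical
  set f : (Fin N → Y) → ℝ := fun y => if y ∈ S₁ then 1 else 0 with hf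
  set g : (Fin N → Y) → ℝ := fun y => if y ∈ S₂ then 1 else 0 with hgdef
  have hind : ∀ (S : Set (Fin N → Y)),
      nuMeas p0 S = ∑ y : Fin N → Y, (∏ i, p0 (y i)) * (if y ∈ S then 1 else 0) := by
    intro S
    refine Finset.sum_congr rfl fun y _ => ?_
    by_cases h : y ∈ S <;> simp [Set.indicator, h]
  have hmonof : ∀ y y', (∀ i, r (y i) ≤ r (y' i)) → f y ≤ f y' := by
    intro y y' h
    simp only [hf]
    by_cases hy : y ∈ S₁
    · rw [if_pos hy, if_pos (hmono P₁ y y' h hy)]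
    · rw [if_neg hy]; positivity
  have hmonog : ∀ y y', (∀ i, r (y i) ≤ r (y' i)) → g y ≤ g y' := by
    intro y y' h
    simp only [hgdef]
    by_cases hy : y ∈ S₂
    · rw [if_pos hy, if_pos (hmono P₂ y y' h hy)]
    · rw [if_neg hy]; positivity
  have key := harris N p0 hp0 hp0sum r f g hmonof hmonog
  rw [hind S₁, hind S₂, hind (S₁ ∩ S₂)]
  refine le_trans (le_of_eq ?_) (le_trans key (le_of_eq ?_))
  · rfl
  · refine Finset.sum_congr rfl fun y _ => ?_
    by_cases h1 : y ∈ S₁ <;> by_cases h2 : y ∈ S₂ <;>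
      simp [hf, hgdef, h1, h2, Set.mem_inter_iff]
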